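/- Let n and N be positive integers, let G be a real n×N matrix, let Y be a real N×N matrix, and let T = [[Iₙ, G],[0, Y]] be the block upper triangular (n+N)×(n+N) matrix with identity (1,1) block. Then for every real polynomial p, (I − T)·p(T) = [[0, −G·p(Y)],[0, (I − Y)·p(Y)]], where p(T) and p(Y) denote the evaluations of p at the matrices T and Y, and I denotes the identity matrix of the appropriate size. -/
import Mathlib


open Matrix Polynomial

lemma aux_block_aeval {n N : ℕ}
    (G : Matrix (Fin n) (Fin N) ℝ) (Y : Matrix (Fin N) (Fin N) ℝ)
    (p : Polynomial ℝ) :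
    ∃ (A : Matrix (Fin n) (Fin n) ℝ) (B : Matrix (Fin n) (Fin N) ℝ), (Polynomial.aeval (Matrix.fromBlocks 1 G 0 Y)) p
      = Matrix.fromBlocks A B 0 ((Polynomial.aeval Y) p) := by
  induction p using Polynomial.induction_on' with
  | add p q hp hq =>
    obtain ⟨A, B, hAB⟩ := hp
    obtain ⟨C, D, hCD⟩ := hq
    exact ⟨A + C, B + D, by simp [hAB, hCD, Matrix.fromBlocks_add]⟩
  | monomial k a =>
    induction k with
    | zero =>
      refine ⟨a • 1, 0, ?_⟩
      simp [Polynomial.monomial_zero_left, Algebra.algebraMap_eq_smul_one,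
        ← Matrix.fromBlocks_one, Matrix.fromBlocks_smul]
    | succ k ih =>
      obtain ⟨A, B, hAB⟩ := ih
      refine ⟨A * 1 + B * (0 : Matrix (Fin N) (Fin n) ℝ), A * G + B * Y, ?_⟩
      have h : (Polynomial.monomial (k + 1)) a
          = (Polynomial.monomial k) a * Polynomial.X := by
        rw [Polynomial.monomial_mul_X]
      rw [h, _root_.map_mul, _root_.map_mul, hAB, Polynomial.aeval_X, Matrix.fromBlocks_multiply]
      simp

/-- For the block upper triangular matrix `T = [[Iₙ, G],[0, Y]]` and any
real polynomial `p`, one has `(I − T)·p(T) = [[0, −G·p(Y)],[0, (I − Y)·p(Y)]]`. -/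
theorem block_triangular_polynomial_identity {n N : ℕ}
    (G : Matrix (Fin n) (Fin N) ℝ) (Y : Matrix (Fin N) (Fin N) ℝ)
    (T : Matrix (Fin n ⊕ Fin N) (Fin n ⊕ Fin N) ℝ)
    (hT : T = Matrix.fromBlocks 1 G 0 Y)
    (p : Polynomial ℝ) :
    (1 - T) * (Polynomial.aeval T) p =
      Matrix.fromBlocks 0 (-(G * (Polynomial.aeval Y) p)) 0
        ((1 - Y) * (Polynomial.aeval Y) p) := by
  subst hT
  obtain ⟨A, B, hAB⟩ := aux_block_aeval G Y p
  rw [hAB]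
  have h1 : (1 : Matrix (Fin n ⊕ Fin N) (Fin n ⊕ Fin N) ℝ)
      = Matrix.fromBlocks 1 0 0 1 := (Matrix.fromBlocks_one).symm
  have hsub : Matrix.fromBlocks (1 : Matrix (Fin n) (Fin n) ℝ) 0 0
      (1 : Matrix (Fin N) (Fin N) ℝ) - Matrix.fromBlocks 1 G 0 Y
      = Matrix.fromBlocks 0 (-G) 0 (1 - Y) := by
    ext i j
    cases i <;> cases j <;> simp [Matrix.fromBlocks]
  rw [h1, hsub, Matrix.fromBlocks_multiply]
  simp [Matrix.sub_mul]
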